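/- Let n ≥ 1 and δ, ε > 0 with ε ≥ 2n²δ. Let B and C be real symmetric positive definite n×n matrices such that every entry of B − C has absolute value at most δ and every entry of C⁻¹ has absolute value at most 1/ε. Then det(C⁻¹B) > 0 and |log det(C⁻¹B)| ≤ 2n³·δ/ε. -/

import Mathlib

open Matrix

theorem log_det_perturbation_bound
    (n : ℕ) (hn : 1 ≤ n)
    (δ ε : ℝ) (hδ : 0 < δ) (hε : 0 < ε) (hεδ : 2 * (n : ℝ) ^ 2 * δ ≤ ε)
    (B C : Matrix (Fin n) (Fin n) ℝ)
    (hB : B.PosDef) (hC : C.PosDef)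
    (hBC : ∀ i j, |(B - C) i j| ≤ δ)
    (hCinv : ∀ i j, |C⁻¹ i j| ≤ 1 / ε) :
    0 < (C⁻¹ * B).det ∧ |Real.log (C⁻¹ * B).det| ≤ 2 * (n : ℝ) ^ 3 * δ / ε := by
  have hnR : (1:ℝ) ≤ (n:ℝ) := by exact_mod_cast hn
  have hne : Nonempty (Fin n) := ⟨⟨0, hn⟩⟩
  set s : ℝ := (n:ℝ)^2 * δ / ε with hs_def
  have hs_pos : 0 < s := by positivity
  have hs_half : s ≤ 1/2 := by
    rw [hs_def, div_le_iff₀ hε]; nlinarith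
  -- square root of C⁻¹
  have hCinvPD : (C⁻¹).PosDef := hC.inv
  set S := (open scoped MatrixOrder in CFC.sqrt C⁻¹) with hSdef
  have hSherm : S.IsHermitian :=
    open scoped MatrixOrder in (nonneg_iff_posSemidef.mp (CFC.sqrt_nonneg C⁻¹)).1
  have hSS : S * S = C⁻¹ :=
    open scoped MatrixOrder in CFC.sqrt_mul_sqrt_self C⁻¹ (nonneg_iff_posSemidef.mpr hCinvPD.posSemidef)
  have hM : (S * B * S).IsHermitian := by
    have := isHermitian_mul_mul_conjTranspose S hB.1
    rwa [hSherm.eq] at this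
  -- determinant equality
  have hdetS : S.det * S.det = C⁻¹.det := by rw [← det_mul, hSS]
  have hdetEq : (C⁻¹ * B).det = (S * B * S).det := by
    rw [det_mul, det_mul, det_mul, ← hdetS]; ring
  -- S is invertible
  have hdetSne : S.det ≠ 0 := by
    intro h
    have : C⁻¹.det ≠ 0 := hCinvPD.det_pos.ne'
    rw [← hdetS, h, mul_zero] at this; exact this rfl
  have hSinj : Function.Injective (S.mulVec) :=
    mulVec_injective_iff_isUnit.2 ((isUnit_iff_isUnit_det S).2 (isUnit_iff_ne_zero.2 hdetSne))
  -- the perturbation matrix and its entry bound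
  have hCC : C⁻¹ * C = 1 := nonsing_inv_mul C (isUnit_iff_ne_zero.2 hC.det_pos.ne')
  have hF : ∀ i j, |(C⁻¹ * (B - C)) i j| ≤ (n:ℝ) * (δ / ε) := by
    intro i j
    rw [Matrix.mul_apply]
    calc |∑ k, C⁻¹ i k * (B - C) k j| ≤ ∑ k, |C⁻¹ i k * (B - C) k j| :=
          Finset.abs_sum_le_sum_abs _ _
      _ ≤ ∑ _k : Fin n, (1/ε) * δ := by
          refine Finset.sum_le_sum fun k _ => ?_
          rw [abs_mul]
          exact mul_le_mul (hCinv i k) (hBC k j) (abs_nonneg _) (by positivity)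
      _ = (n:ℝ) * (δ / ε) := by
          rw [Finset.sum_const, Finset.card_univ, Fintype.card_fin, nsmul_eq_mul]; ring
  -- eigenvalue bounds
  set ν : Fin n → ℝ := hM.eigenvalues with hν_def
  have hkey : ∀ j, |ν j - 1| ≤ s := by
    intro j
    set v : Fin n → ℝ := ⇑(hM.eigenvectorBasis j) with hv_def
    have hv : (S * B * S) *ᵥ v = ν j • v := hM.mulVec_eigenvectorBasis j
    have hvne : v ≠ 0 := by
      have := hM.eigenvectorBasis.orthonormal.ne_zero j
      intro h; apply this; ext k; exact congrFun h k
    set w : Fin n → ℝ := S *ᵥ v with hw_def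
    have hwne : w ≠ 0 := by
      intro h
      exact hvne (hSinj (by rw [← hw_def, h, mulVec_zero]))
    have hw : (C⁻¹ * B) *ᵥ w = ν j • w := by
      rw [hw_def, mulVec_mulVec, ← mulVec_smul]
      have : C⁻¹ * B * S = S * (S * B * S) := by
        rw [← Matrix.mul_assoc, ← Matrix.mul_assoc, hSS]
      rw [this, ← mulVec_mulVec, hv, mulVec_smul]
    have hEw : (C⁻¹ * (B - C)) *ᵥ w = (ν j - 1) • w := by
      have h1 : C⁻¹ * (B - C) = C⁻¹ * B - 1 := by
        rw [Matrix.mul_sub, hCC]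
      rw [h1, Matrix.sub_mulVec, hw, Matrix.one_mulVec, sub_smul, one_smul]
    obtain ⟨i, -, hi⟩ := Finset.exists_max_image Finset.univ (fun k => |w k|)
      Finset.univ_nonempty
    have hwi : 0 < |w i| := by
      rcases (abs_nonneg (w i)).lt_or_eq with h | h
      · exact h
      · exfalso; apply hwne; ext k
        have := hi k (Finset.mem_univ k)
        rw [← h] at this
        simpa using le_antisymm this (abs_nonneg _)
    have hmain : |ν j - 1| * |w i| ≤ s * |w i| := by
      have h1 : (ν j - 1) * w i = ((C⁻¹ * (B - C)) *ᵥ w) i := by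
        rw [hEw]; simp [Pi.smul_apply, smul_eq_mul]
      calc |ν j - 1| * |w i| = |((C⁻¹ * (B - C)) *ᵥ w) i| := by
            rw [← abs_mul, h1]
        _ = |∑ k, (C⁻¹ * (B - C)) i k * w k| := by rw [Matrix.mulVec, dotProduct]
        _ ≤ ∑ k, |(C⁻¹ * (B - C)) i k * w k| := Finset.abs_sum_le_sum_abs _ _
        _ ≤ ∑ _k : Fin n, ((n:ℝ) * (δ / ε)) * |w i| := by
            refine Finset.sum_le_sum fun k _ => ?_
            rw [abs_mul]
            exact mul_le_mul (hF i k) (hi k (Finset.mem_univ k)) (abs_nonneg _)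
              (by positivity)
        _ = s * |w i| := by
            rw [Finset.sum_const, Finset.card_univ, Fintype.card_fin, nsmul_eq_mul,
              hs_def]
            ring
    exact le_of_mul_le_mul_right hmain hwi
  have hν_lb : ∀ j, 1/2 ≤ ν j := by
    intro j
    have := abs_le.1 (hkey j)
    linarith [this.1]
  have hν_pos : ∀ j, 0 < ν j := fun j => lt_of_lt_of_le (by norm_num) (hν_lb j)
  -- determinant as a product of eigenvalues
  have hprod : (C⁻¹ * B).det = ∏ j, ν j := by
    rw [hdetEq]
    have := hM.det_eq_prod_eigenvalues
    simpa using this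
  have hdet_pos : 0 < (C⁻¹ * B).det := by
    rw [hprod]; exact Finset.prod_pos fun j _ => hν_pos j
  refine ⟨hdet_pos, ?_⟩
  have hlog : Real.log (C⁻¹ * B).det = ∑ j, Real.log (ν j) := by
    rw [hprod]
    exact Real.log_prod fun j _ => (hν_pos j).ne'
  have hlogbound : ∀ j, |Real.log (ν j)| ≤ 2 * s := by
    intro j
    have h1 := abs_le.1 (hkey j)
    have hpos := hν_pos j
    rw [abs_le]
    constructor
    · have hinv : Real.log (ν j)⁻¹ ≤ (ν j)⁻¹ - 1 :=
        Real.log_le_sub_one_of_pos (by positivity)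
      rw [Real.log_inv] at hinv
      have hiv : (ν j)⁻¹ * ν j = 1 := inv_mul_cancel₀ hpos.ne'
      have hlb := hν_lb j
      nlinarith [hinv, h1.1, h1.2]
    · calc Real.log (ν j) ≤ ν j - 1 := Real.log_le_sub_one_of_pos hpos
        _ ≤ s := by linarith [h1.2]
        _ ≤ 2 * s := by linarith
  calc |Real.log (C⁻¹ * B).det| = |∑ j, Real.log (ν j)| := by rw [hlog]
    _ ≤ ∑ j, |Real.log (ν j)| := Finset.abs_sum_le_sum_abs _ _
    _ ≤ ∑ _j : Fin n, 2 * s := Finset.sum_le_sum fun j _ => hlogbound j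
    _ = (n:ℝ) * (2 * s) := by
        rw [Finset.sum_const, Finset.card_univ, Fintype.card_fin, nsmul_eq_mul]
    _ = 2 * (n:ℝ)^3 * δ / ε := by rw [hs_def]; ring
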